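/- Let an admissible chain-partition datum for e_1,…,e_M be given with β̂ ≠ 0, and set β = β̂/‖β̂‖². Suppose i ∈ Δ_{h,m} and j ∈ Δ_{h',m'} for (h,m), (h',m') ∈ J. Then ⟪β, e_i − e_j⟫ = ‖β‖² if and only if h' = h and m' = m + 1; and ⟪β, e_i − e_j⟫ ≥ ‖β‖² if and only if either m' ≥ m + 2, or m' = m + 1 and h' ≥ h. -/

import Mathlib

open scoped RealInnerProductSpace BigOperators

/-- A chain-partition datum for the pairwise orthogonal nonzero vectors `e 0, …, e (M-1)`:
a positive integer `L`, functions `l1 l2 : {1,…,L} → ℤ` with `l1 h ≤ l2 h`, and pairwise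
disjoint nonempty subsets `Δ h m ⊆ {1,…,M}` for `(h,m)` in the index set
`J = {(h,m) : 1 ≤ h ≤ L, l1 h ≤ m ≤ l2 h}` whose union is `{1,…,M}`. -/
structure ChainPartitionDatum (M : ℕ) (V : Type*) [NormedAddCommGroup V]
    [InnerProductSpace ℝ V] (e : Fin M → V) where
  L : ℕ
  Lpos : 0 < L
  l1 : Fin L → ℤ
  l2 : Fin L → ℤ
  l1_le_l2 : ∀ h, l1 h ≤ l2 h
  Δ : Fin L → ℤ → Finset (Fin M)
  Δ_nonempty : ∀ h m, l1 h ≤ m → m ≤ l2 h → (Δ h m).Nonempty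
  Δ_disjoint : ∀ h m h' m', l1 h ≤ m → m ≤ l2 h → l1 h' ≤ m' → m' ≤ l2 h' →
    (h, m) ≠ (h', m') → Disjoint (Δ h m) (Δ h' m')
  Δ_union : ∀ i : Fin M, ∃ h m, l1 h ≤ m ∧ m ≤ l2 h ∧ i ∈ Δ h m

namespace ChainPartitionDatum

variable {V : Type*} [NormedAddCommGroup V] [InnerProductSpace ℝ V]
variable {M : ℕ} {e : Fin M → V}

/-- `r h m = Σ_{j ∈ Δ_{h,m}} ‖e_j‖⁻²`. -/
noncomputable def r (D : ChainPartitionDatum M V e) (h : Fin D.L) (m : ℤ) : ℝ :=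
  ∑ j ∈ D.Δ h m, (‖e j‖ ^ 2)⁻¹

/-- `ε h = (Σ_{m=l1 h}^{l2 h} m·r_{h,m}) / (Σ_{m=l1 h}^{l2 h} r_{h,m})`. -/
noncomputable def eps (D : ChainPartitionDatum M V e) (h : Fin D.L) : ℝ :=
  (∑ m ∈ Finset.Icc (D.l1 h) (D.l2 h), (m : ℝ) * D.r h m) /
    ∑ m ∈ Finset.Icc (D.l1 h) (D.l2 h), D.r h m

/-- Admissibility: `−1/2 ≤ ε(h) < 1/2` for all `h` and `ε(1) > ε(2) > … > ε(L)`. -/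
def Admissible (D : ChainPartitionDatum M V e) : Prop :=
  (∀ h, -(1 / 2 : ℝ) ≤ D.eps h ∧ D.eps h < 1 / 2) ∧ StrictAnti D.eps

/-- `β̂ = Σ_{h=1}^{L} Σ_{m=l1 h}^{l2 h} Σ_{j ∈ Δ_{h,m}} (ε(h) − m)·e_j/‖e_j‖²`. -/
noncomputable def betaHat (D : ChainPartitionDatum M V e) : V :=
  ∑ h : Fin D.L, ∑ m ∈ Finset.Icc (D.l1 h) (D.l2 h), ∑ j ∈ D.Δ h m,
    ((D.eps h - (m : ℝ)) / ‖e j‖ ^ 2) • e j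

/-- Auxiliary: `⟪β̂, e_i⟫ = ε(h) − m` when `i ∈ Δ_{h,m}`. -/
lemma inner_betaHat_aux (D : ChainPartitionDatum M V e)
    (he : ∀ i, e i ≠ 0) (horth : ∀ i j : Fin M, i ≠ j → ⟪e i, e j⟫ = 0)
    (h : Fin D.L) (m : ℤ) (hm₁ : D.l1 h ≤ m) (hm₂ : m ≤ D.l2 h)
    (i : Fin M) (hi : i ∈ D.Δ h m) :
    ⟪D.betaHat, e i⟫ = D.eps h - m := by
  have key : ∀ (h'' : Fin D.L) (m'' : ℤ),
      ⟪∑ j ∈ D.Δ h'' m'', ((D.eps h'' - (m'' : ℝ)) / ‖e j‖ ^ 2) • e j, e i⟫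
        = if i ∈ D.Δ h'' m'' then D.eps h'' - (m'' : ℝ) else 0 := by
    intro h'' m''
    rw [sum_inner]
    have h1 : ∀ j ∈ D.Δ h'' m'',
        ⟪((D.eps h'' - (m'' : ℝ)) / ‖e j‖ ^ 2) • e j, e i⟫
          = if j = i then D.eps h'' - (m'' : ℝ) else 0 := by
      intro j _
      rw [real_inner_smul_left]
      by_cases hji : j = i
      · subst hji
        rw [if_pos rfl, real_inner_self_eq_norm_sq,
          div_mul_cancel₀ _ (pow_ne_zero _ (norm_ne_zero_iff.2 (he j)))]
      · rw [horth j i hji, if_neg hji, mul_zero]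
    rw [Finset.sum_congr rfl h1,
      Finset.sum_ite_eq' (D.Δ h'' m'') i (fun _ => D.eps h'' - (m'' : ℝ))]
  have hnotin : ∀ (h'' : Fin D.L) (m'' : ℤ), D.l1 h'' ≤ m'' → m'' ≤ D.l2 h'' →
      (h'', m'') ≠ (h, m) → i ∉ D.Δ h'' m'' := by
    intro h'' m'' hb1 hb2 hne hmem
    exact Finset.disjoint_left.1
      (D.Δ_disjoint h'' m'' h m hb1 hb2 hm₁ hm₂ hne) hmem hi
  calc ⟪D.betaHat, e i⟫
      = ∑ h'' : Fin D.L, ∑ m'' ∈ Finset.Icc (D.l1 h'') (D.l2 h''),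
          (if i ∈ D.Δ h'' m'' then D.eps h'' - (m'' : ℝ) else 0) := by
        rw [betaHat, sum_inner]
        exact Finset.sum_congr rfl fun h'' _ => by
          rw [sum_inner]; exact Finset.sum_congr rfl fun m'' _ => key h'' m''
    _ = D.eps h - m := ?_
  rw [Finset.sum_eq_single h]
  · rw [Finset.sum_eq_single_of_mem m (Finset.mem_Icc.2 ⟨hm₁, hm₂⟩)]
    · rw [if_pos hi]
    · intro m'' hmem hne
      rw [Finset.mem_Icc] at hmem
      rw [if_neg (hnotin h m'' hmem.1 hmem.2 (by simp [hne]))]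
  · intro h'' _ hne
    apply Finset.sum_eq_zero
    intro m'' hmem
    rw [Finset.mem_Icc] at hmem
    rw [if_neg (hnotin h'' m'' hmem.1 hmem.2 (by simp [hne]))]
  · intro hh; exact absurd (Finset.mem_univ h) hh

end ChainPartitionDatum

/-- For an admissible chain-partition datum with `β̂ ≠ 0`, `β = β̂/‖β̂‖²`,
and `i ∈ Δ_{h,m}`, `j ∈ Δ_{h',m'}` with `(h,m), (h',m') ∈ J`: `⟪β, e_i − e_j⟫ = ‖β‖²` iff
`h' = h` and `m' = m+1`; and `⟪β, e_i − e_j⟫ ≥ ‖β‖²` iff `m' ≥ m+2`, or `m' = m+1` and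
`h' ≥ h`. -/
theorem admissible_chainPartitionDatum_inner_sub_eq_iff
    {V : Type*} [NormedAddCommGroup V] [InnerProductSpace ℝ V]
    {M : ℕ} (hM : 0 < M) (e : Fin M → V) (he : ∀ i, e i ≠ 0)
    (horth : ∀ i j : Fin M, i ≠ j → ⟪e i, e j⟫ = 0)
    (D : ChainPartitionDatum M V e) (hD : D.Admissible)
    (hne : D.betaHat ≠ 0) (β : V) (hβ : β = (‖D.betaHat‖ ^ 2)⁻¹ • D.betaHat)
    (h h' : Fin D.L) (m m' : ℤ)
    (hm₁ : D.l1 h ≤ m) (hm₂ : m ≤ D.l2 h)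
    (hm'₁ : D.l1 h' ≤ m') (hm'₂ : m' ≤ D.l2 h')
    (i j : Fin M) (hi : i ∈ D.Δ h m) (hj : j ∈ D.Δ h' m') :
    (⟪β, e i - e j⟫ = ‖β‖ ^ 2 ↔ h' = h ∧ m' = m + 1) ∧
      (⟪β, e i - e j⟫ ≥ ‖β‖ ^ 2 ↔ m + 2 ≤ m' ∨ (m' = m + 1 ∧ h ≤ h')) := by
  have hbi : ⟪D.betaHat, e i⟫ = D.eps h - m :=
    D.inner_betaHat_aux he horth h m hm₁ hm₂ i hi
  have hbj : ⟪D.betaHat, e j⟫ = D.eps h' - m' :=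
    D.inner_betaHat_aux he horth h' m' hm'₁ hm'₂ j hj
  set A : ℝ := ‖D.betaHat‖ ^ 2 with hA
  have hA0 : 0 < A := by
    rw [hA]; exact pow_pos (norm_pos_iff.2 hne) 2
  set X : ℝ := (m' : ℝ) - (m : ℝ) + (D.eps h - D.eps h') with hX
  have hinner : ⟪β, e i - e j⟫ = A⁻¹ * X := by
    rw [hβ, inner_sub_right, real_inner_smul_left, real_inner_smul_left, hbi, hbj, hX]
    ring
  have hnorm : ‖β‖ ^ 2 = A⁻¹ := by
    rw [hβ, norm_smul, Real.norm_eq_abs, abs_of_pos (inv_pos.2 hA0), mul_pow, ← hA]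
    field_simp
  have hd1 : -1 < D.eps h - D.eps h' := by
    have := (hD.1 h).1; have := (hD.1 h').2; linarith
  have hd2 : D.eps h - D.eps h' < 1 := by
    have := (hD.1 h).2; have := (hD.1 h').1; linarith
  have heq : ⟪β, e i - e j⟫ = ‖β‖ ^ 2 ↔ X = 1 := by
    rw [hinner, hnorm]
    constructor
    · intro hx
      have := mul_left_cancel₀ (inv_ne_zero hA0.ne')
        (hx.trans (mul_one A⁻¹).symm)
      exact this
    · intro hx; rw [hx, mul_one]
  have hge : ⟪β, e i - e j⟫ ≥ ‖β‖ ^ 2 ↔ 1 ≤ X := by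
    rw [hinner, hnorm, ge_iff_le]
    have hAi : 0 < A⁻¹ := inv_pos.2 hA0
    constructor
    · intro hx; nlinarith
    · intro hx; nlinarith
  constructor
  · rw [heq]
    constructor
    · intro hx
      have hcast : ((m' - m : ℤ) : ℝ) = 1 - (D.eps h - D.eps h') := by
        push_cast; rw [hX] at hx; linarith
      have h0 : (0 : ℤ) < m' - m := by
        have : (0 : ℝ) < ((m' - m : ℤ) : ℝ) := by rw [hcast]; linarith
        exact_mod_cast this
      have h2 : m' - m < 2 := by
        have : ((m' - m : ℤ) : ℝ) < 2 := by rw [hcast]; linarith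
        exact_mod_cast this
      have hm'' : m' = m + 1 := by omega
      have hde : D.eps h = D.eps h' := by
        have : ((m' - m : ℤ) : ℝ) = 1 := by rw [hm'']; push_cast; ring
        rw [this] at hcast; linarith
      exact ⟨(hD.2.injective hde).symm, hm''⟩
    · rintro ⟨rfl, rfl⟩
      rw [hX]; push_cast; ring
  · rw [hge]
    constructor
    · intro hx
      by_cases hc : m + 2 ≤ m'
      · exact Or.inl hc
      · push_neg at hc
        have h1' : (1 : ℝ) - (D.eps h - D.eps h') ≤ ((m' - m : ℤ) : ℝ) := by
          push_cast; rw [hX] at hx; linarith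
        have h0 : (0 : ℤ) < m' - m := by
          have : (0 : ℝ) < ((m' - m : ℤ) : ℝ) := by linarith
          exact_mod_cast this
        have hm'' : m' = m + 1 := by omega
        have hd0 : D.eps h' ≤ D.eps h := by
          have : ((m' - m : ℤ) : ℝ) = 1 := by rw [hm'']; push_cast; ring
          rw [this] at h1'; linarith
        exact Or.inr ⟨hm'', hD.2.le_iff_ge.1 hd0⟩
    · rintro (hc | ⟨rfl, hle⟩)
      · have : ((m : ℝ) + 2) ≤ (m' : ℝ) := by exact_mod_cast hc
        rw [hX]; linarith
      · have hd0 : D.eps h' ≤ D.eps h := hD.2.le_iff_ge.2 hle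
        rw [hX]; push_cast; linarith
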